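/- Let r ∈ ℕ, r ≥ 2, R = rI on ℝ^ν, and L ⊂ ℝ^ν finite with 0 ∈ L; let ρ_l(t) = (t−l)/r. Then the convex hull of the attractor X (the unique compact set with X = ⋃_{l∈L} ρ_l(X)) equals the simplex generated by 0 and the points y_l = −l/(r−1) for l ∈ L \ {0}, i.e., conv(X) = { Σ_{l≠0} s_l y_l : s_l ≥ 0, Σ s_l ≤ 1 }. -/

import Mathlib

namespace ConvAttrAux

open Finset

variable {ν : ℕ}

/-- The simplex set. -/
def S (r : ℕ) (L : Finset (Fin ν → ℝ)) : Set (Fin ν → ℝ) :=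
  {y : Fin ν → ℝ | ∃ s : (Fin ν → ℝ) → ℝ,
        (∀ l, 0 ≤ s l) ∧ s 0 = 0 ∧ (∑ l ∈ L, s l) ≤ 1 ∧
        y = ∑ l ∈ L, s l • ((-(((r : ℝ) - 1)⁻¹)) • l)}

lemma S_convex (r : ℕ) (L : Finset (Fin ν → ℝ)) : Convex ℝ (S r L) := by
  rintro x ⟨s, hs, hs0, hssum, rfl⟩ y ⟨t, ht, ht0, htsum, rfl⟩ a b ha hb hab
  refine ⟨fun m => a * s m + b * t m, fun m => add_nonneg (mul_nonneg ha (hs m)) (mul_nonneg hb (ht m)), by simp [hs0, ht0], ?_, ?_⟩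
  · simp only []
    rw [Finset.sum_add_distrib, ← Finset.mul_sum, ← Finset.mul_sum]
    nlinarith [mul_le_mul_of_nonneg_left hssum ha, mul_le_mul_of_nonneg_left htsum hb]
  · simp only []
    rw [Finset.smul_sum, Finset.smul_sum, ← Finset.sum_add_distrib]
    refine Finset.sum_congr rfl fun m _ => ?_
    module

lemma zero_mem_S (r : ℕ) (L : Finset (Fin ν → ℝ)) : (0 : Fin ν → ℝ) ∈ S r L :=
  ⟨0, fun _ => le_rfl, rfl, by simp, by simp⟩

lemma pt_mem_S (r : ℕ) (L : Finset (Fin ν → ℝ)) {l : Fin ν → ℝ} (hl : l ∈ L) :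
    (-(((r : ℝ) - 1)⁻¹)) • l ∈ S r L := by
  classical
  by_cases h0 : l = 0
  · subst h0; simpa using zero_mem_S r L
  · refine ⟨fun m => if m = l then 1 else 0, fun m => by by_cases h : m = l <;> simp [h],
      if_neg (fun h => h0 h.symm), ?_, ?_⟩
    · rw [Finset.sum_ite_eq' L l (fun _ => (1:ℝ))]
      simp [hl]
    · simp only [ite_smul, one_smul, zero_smul]
      rw [Finset.sum_ite_eq' L l]
      simp [hl]

lemma S_inv (r : ℕ) (hr : 2 ≤ r) (L : Finset (Fin ν → ℝ)) {l : Fin ν → ℝ} (hl : l ∈ L)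
    {y : Fin ν → ℝ} (hy : y ∈ S r L) : ((r : ℝ))⁻¹ • (y - l) ∈ S r L := by
  classical
  obtain ⟨s, hs, hs0, hsum, rfl⟩ := hy
  have hr2 : (2:ℝ) ≤ (r:ℝ) := by exact_mod_cast hr
  have hrpos : (0:ℝ) < r := by linarith
  have hrne : ((r:ℝ)) ≠ 0 := ne_of_gt hrpos
  have hr1ne : ((r:ℝ) - 1) ≠ 0 := by intro h; nlinarith [h]
  by_cases h0 : l = 0
  · subst h0
    refine ⟨fun m => s m / r, fun m => div_nonneg (hs m) hrpos.le, by simp [hs0], ?_, ?_⟩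
    · rw [← Finset.sum_div]
      calc (∑ l ∈ L, s l) / r ≤ 1 / r := by gcongr
        _ ≤ 1 := by rw [div_le_one hrpos]; linarith
    · rw [sub_zero, Finset.smul_sum]
      refine Finset.sum_congr rfl fun m _ => ?_
      simp only []
      module
  · refine ⟨fun m => s m / r + if m = l then ((r:ℝ) - 1)/r else 0, ?_, ?_, ?_, ?_⟩
    · intro m
      simp only []
      have h1 : (0:ℝ) ≤ s m / r := div_nonneg (hs m) hrpos.le
      have h2 : (0:ℝ) ≤ if m = l then ((r:ℝ) - 1)/r else 0 := by
        split
        · apply div_nonneg <;> linarith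
        · exact le_rfl
      linarith
    · simp only []
      rw [if_neg (fun h => h0 h.symm), hs0]; simp
    · simp only []
      rw [Finset.sum_add_distrib, Finset.sum_ite_eq' L l (fun _ => ((r:ℝ)-1)/r), if_pos hl,
        ← Finset.sum_div]
      have : (∑ l ∈ L, s l) / r ≤ 1 / r := by gcongr
      have heq : (1:ℝ)/r + ((r:ℝ)-1)/r = 1 := by field_simp; ring
      linarith
    · simp only []
      have hsplit : ∀ m : Fin ν → ℝ,
          (s m / r + if m = l then ((r:ℝ) - 1)/r else 0) • ((-(((r : ℝ) - 1)⁻¹)) • m)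
          = (s m / r) • ((-(((r : ℝ) - 1)⁻¹)) • m)
            + (if m = l then (((r:ℝ) - 1)/r) • ((-(((r : ℝ) - 1)⁻¹)) • m) else 0) := by
        intro m; rw [add_smul, ite_smul, zero_smul]
      rw [Finset.sum_congr rfl (fun m _ => hsplit m), Finset.sum_add_distrib,
        Finset.sum_ite_eq' L l, if_pos hl]
      have h1 : ∑ m ∈ L, (s m / r) • ((-(((r : ℝ) - 1)⁻¹)) • m)
          = (r:ℝ)⁻¹ • ∑ m ∈ L, s m • ((-(((r : ℝ) - 1)⁻¹)) • m) := by
        rw [Finset.smul_sum]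
        refine Finset.sum_congr rfl fun m _ => ?_
        module
      have h2 : (((r:ℝ) - 1)/r) • ((-(((r : ℝ) - 1)⁻¹)) • l) = -( ((r:ℝ))⁻¹ • l ) := by
        rw [smul_smul, ← neg_smul]
        congr 1
        field_simp
      rw [h1, h2, smul_sub, sub_eq_add_neg]

lemma S_sub_hull (r : ℕ) (L : Finset (Fin ν → ℝ)) (h0L : (0 : Fin ν → ℝ) ∈ L)
    {A : Set (Fin ν → ℝ)} (hA : Convex ℝ A)
    (hmem : ∀ m ∈ L, (-(((r : ℝ) - 1)⁻¹)) • m ∈ A) : S r L ⊆ A := by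
  classical
  rintro y ⟨s, hs, hs0, hsum, rfl⟩
  set w : (Fin ν → ℝ) → ℝ := fun m => if m = 0 then 1 - ∑ l ∈ L, s l else s m with hw
  have h3 : ∀ m ∈ L \ {0}, w m = s m := by
    intro m hm
    have hm0 : m ≠ 0 := by simpa using (Finset.mem_sdiff.mp hm).2
    simp only [hw, if_neg hm0]
  have hw0 : ∀ m ∈ L, 0 ≤ w m := by
    intro m _
    simp only [hw]
    split
    · linarith
    · exact hs m
  have hwsum : ∑ m ∈ L, w m = 1 := by
    rw [Finset.sum_eq_add_sum_sdiff_singleton_of_mem h0L w, Finset.sum_congr rfl h3]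
    have h2 := Finset.sum_eq_add_sum_sdiff_singleton_of_mem h0L s
    rw [hs0, zero_add] at h2
    simp only [hw, if_pos rfl]
    linarith [h2]
  have hc := Convex.sum_mem hA hw0 hwsum (z := fun m => (-(((r : ℝ) - 1)⁻¹)) • m) hmem
  have hpt : ∑ m ∈ L, w m • ((-(((r : ℝ) - 1)⁻¹)) • m)
      = ∑ m ∈ L, s m • ((-(((r : ℝ) - 1)⁻¹)) • m) := by
    rw [Finset.sum_eq_add_sum_sdiff_singleton_of_mem h0L (fun m => w m • ((-(((r : ℝ) - 1)⁻¹)) • m)),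
      Finset.sum_eq_add_sum_sdiff_singleton_of_mem h0L (fun m => s m • ((-(((r : ℝ) - 1)⁻¹)) • m))]
    simp only [smul_zero]
    congr 1
    exact Finset.sum_congr rfl fun m hm => by rw [h3 m hm]
  rwa [hpt] at hc

lemma S_closed (r : ℕ) (L : Finset (Fin ν → ℝ)) (h0L : (0 : Fin ν → ℝ) ∈ L) :
    IsClosed (S r L) := by
  have h1 : S r L = convexHull ℝ ((fun l => (-(((r : ℝ) - 1)⁻¹)) • l) '' (L : Set (Fin ν → ℝ))) := by
    apply subset_antisymm
    · exact S_sub_hull r L h0L (convex_convexHull ℝ _)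
        (fun m hm => subset_convexHull ℝ _ ⟨m, hm, rfl⟩)
    · refine convexHull_min ?_ (S_convex r L)
      rintro _ ⟨m, hm, rfl⟩
      exact pt_mem_S r L hm
  rw [h1]
  exact ((L.finite_toSet.image _).isCompact_convexHull (𝕜 := ℝ)).isClosed

lemma fixed_mem (r : ℕ) (hr : 2 ≤ r) (L : Finset (Fin ν → ℝ))
    (X : Set (Fin ν → ℝ)) (hXc : IsCompact X) (hXne : X.Nonempty)
    (hX : X = ⋃ l ∈ L, (fun t => ((r : ℝ))⁻¹ • (t - l)) '' X)
    {l : Fin ν → ℝ} (hl : l ∈ L) : (-(((r : ℝ) - 1)⁻¹)) • l ∈ X := by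
  obtain ⟨x₀, hx₀⟩ := hXne
  have hr2 : (2:ℝ) ≤ (r:ℝ) := by exact_mod_cast hr
  have hrpos : (0:ℝ) < r := by linarith
  have hrne : ((r:ℝ)) ≠ 0 := ne_of_gt hrpos
  have hr1ne : ((r:ℝ) - 1) ≠ 0 := by intro h; nlinarith [h]
  set κ : ℝ := -(((r : ℝ) - 1)⁻¹) with hκ
  set f : (Fin ν → ℝ) → (Fin ν → ℝ) := fun t => ((r : ℝ))⁻¹ • (t - l) with hf
  set y : Fin ν → ℝ := κ • l with hy
  have hmaps : ∀ x ∈ X, f x ∈ X := by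
    intro x hx
    rw [hX]
    exact Set.mem_biUnion hl ⟨x, hx, rfl⟩
  have hfy : f y = y := by
    have h1 : y - l = (κ - 1) • l := by rw [sub_smul, one_smul, hy]
    have h2 : ((r:ℝ))⁻¹ * (κ - 1) = κ := by rw [hκ]; field_simp; ring
    rw [hf]
    simp only
    rw [h1, smul_smul, h2, hy]
  have haff : ∀ u v : Fin ν → ℝ, f (u + v) = f u + ((r:ℝ))⁻¹ • v := by
    intro u v
    simp only [hf]
    rw [show u + v - l = (u - l) + v by abel, smul_add]
  have hiter : ∀ n, f^[n] x₀ = y + (((r:ℝ))⁻¹)^n • (x₀ - y) := by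
    intro n
    induction n with
    | zero => simp
    | succ n ih =>
      rw [Function.iterate_succ_apply', ih, haff, hfy, smul_smul, ← pow_succ']
  have hXmem : ∀ n, f^[n] x₀ ∈ X := by
    intro n
    induction n with
    | zero => simpa using hx₀
    | succ n ih => rw [Function.iterate_succ_apply']; exact hmaps _ ih
  have hq : |((r:ℝ))⁻¹| < 1 := by
    rw [abs_of_nonneg (by positivity)]
    rw [inv_lt_one_iff₀]
    right; linarith
  have hpow : Filter.Tendsto (fun n : ℕ => (((r:ℝ))⁻¹)^n) Filter.atTop (nhds 0) :=
    tendsto_pow_atTop_nhds_zero_of_abs_lt_one hq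
  have htend : Filter.Tendsto (fun n => f^[n] x₀) Filter.atTop (nhds y) := by
    simp only [hiter]
    have : Filter.Tendsto (fun n : ℕ => (((r:ℝ))⁻¹)^n • (x₀ - y)) Filter.atTop
        (nhds ((0:ℝ) • (x₀ - y))) := hpow.smul_const _
    rw [zero_smul] at this
    simpa using (tendsto_const_nhds (x := y)).add this
  exact hXc.isClosed.mem_of_tendsto htend (Filter.Eventually.of_forall hXmem)

lemma X_sub_S (r : ℕ) (hr : 2 ≤ r) (L : Finset (Fin ν → ℝ)) (h0L : (0 : Fin ν → ℝ) ∈ L)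
    (X : Set (Fin ν → ℝ)) (hXc : IsCompact X)
    (hX : X = ⋃ l ∈ L, (fun t => ((r : ℝ))⁻¹ • (t - l)) '' X) : X ⊆ S r L := by
  obtain ⟨M, hM⟩ := hXc.isBounded.exists_norm_le
  have hr2 : (2:ℝ) ≤ (r:ℝ) := by exact_mod_cast hr
  have hrpos : (0:ℝ) < r := by linarith
  have key : ∀ n : ℕ, ∀ x ∈ X, ∃ p ∈ S r L, ‖x - p‖ ≤ M * (((r:ℝ))⁻¹)^n := by
    intro n
    induction n with
    | zero =>
      intro x hx
      exact ⟨0, zero_mem_S r L, by simpa using hM x hx⟩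
    | succ n ih =>
      intro x hx
      rw [hX] at hx
      simp only [Set.mem_iUnion, Set.mem_image, exists_prop] at hx
      obtain ⟨l, hl, x', hx', rfl⟩ := hx
      obtain ⟨p', hp', hb⟩ := ih x' hx'
      refine ⟨((r:ℝ))⁻¹ • (p' - l), S_inv r hr L hl hp', ?_⟩
      have : ((r:ℝ))⁻¹ • (x' - l) - ((r:ℝ))⁻¹ • (p' - l) = ((r:ℝ))⁻¹ • (x' - p') := by
        rw [← smul_sub, sub_sub_sub_cancel_right]
      rw [this, norm_smul]
      have hrinv : (0:ℝ) ≤ ((r:ℝ))⁻¹ := by positivity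
      calc ‖((r:ℝ))⁻¹‖ * ‖x' - p'‖ = ((r:ℝ))⁻¹ * ‖x' - p'‖ := by
            rw [Real.norm_eq_abs, abs_of_nonneg hrinv]
        _ ≤ ((r:ℝ))⁻¹ * (M * (((r:ℝ))⁻¹)^n) := by gcongr
        _ = M * (((r:ℝ))⁻¹)^(n+1) := by ring
  intro x hx
  have hclosed := S_closed r L h0L
  rw [← hclosed.closure_eq]
  rw [Metric.mem_closure_iff]
  intro ε hε
  have hq : |((r:ℝ))⁻¹| < 1 := by
    rw [abs_of_nonneg (by positivity), inv_lt_one_iff₀]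
    right; linarith
  have hpow : Filter.Tendsto (fun n : ℕ => M * (((r:ℝ))⁻¹)^n) Filter.atTop (nhds 0) := by
    have := (tendsto_pow_atTop_nhds_zero_of_abs_lt_one hq).const_mul M
    simpa using this
  obtain ⟨n, hn⟩ := (hpow.eventually (gt_mem_nhds hε)).exists
  obtain ⟨p, hp, hb⟩ := key n x hx
  exact ⟨p, hp, lt_of_le_of_lt (by rw [dist_eq_norm]; exact hb) hn⟩

end ConvAttrAux

/-- For `R = rI` (`r ≥ 2`) and `ρ_l(t) = (t−l)/r`, the convex hull of the attractor `X`
(`X = ⋃_{l∈L} ρ_l(X)`) is the simplex generated by `0` and the fixed points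
`y_l = −l/(r−1)`, `l ∈ L \ {0}`.  (The coefficient function `s` is normalized by `s 0 = 0`,
which encodes that the sum runs over `L \ {0}`.) -/
theorem convexHull_attractor_eq_simplex {ν : ℕ} (r : ℕ) (hr : 2 ≤ r)
    (L : Finset (Fin ν → ℝ)) (h0L : (0 : Fin ν → ℝ) ∈ L)
    (X : Set (Fin ν → ℝ)) (hXc : IsCompact X) (hXne : X.Nonempty)
    (hX : X = ⋃ l ∈ L, (fun t => ((r : ℝ))⁻¹ • (t - l)) '' X) :
    convexHull ℝ X =
      {y : Fin ν → ℝ | ∃ s : (Fin ν → ℝ) → ℝ,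
        (∀ l, 0 ≤ s l) ∧ s 0 = 0 ∧ (∑ l ∈ L, s l) ≤ 1 ∧
        y = ∑ l ∈ L, s l • ((-(((r : ℝ) - 1)⁻¹)) • l)} := by
  have h : convexHull ℝ X = ConvAttrAux.S r L := by
    apply subset_antisymm
    · exact convexHull_min (ConvAttrAux.X_sub_S r hr L h0L X hXc hX) (ConvAttrAux.S_convex r L)
    · exact ConvAttrAux.S_sub_hull r L h0L (convex_convexHull ℝ X)
        (fun m hm => subset_convexHull ℝ X (ConvAttrAux.fixed_mem r hr L X hXc hXne hX hm))
  exact h
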